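/- Conditional form of Bayes' rule, zero numerator: if $E(X\cdot C|D) = 0$ and there is a positive real number $p$ with $pD \lesssim C\cdot D$, then $E(X|C\cdot D) = 0$. -/
import Mathlib


/-- A plausible preorder on a unital associative commutative real algebra. -/
structure PlausiblePreorder (T : Type*) [CommRing T] [Algebra ℝ T] where
  le : T → T → Prop
  plausible : ∀ A : T, A * A = A → le 0 A
  additive : ∀ X Y : T, le 0 X → le 0 Y → le 0 (X + Y)
  smul_nonneg : ∀ (q : ℝ) (X : T), 0 ≤ q → le 0 X → le 0 (q • X)
  extension : ∀ X Y : T, le X Y ↔ le 0 (Y - X)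

variable {T : Type*} [CommRing T] [Algebra ℝ T]

/-- The strict part of a plausible preorder. -/
def PlausiblePreorder.lt (P : PlausiblePreorder T) (X Y : T) : Prop :=
  P.le X Y ∧ ¬ P.le Y X

/-- The equivalence part of a plausible preorder. -/
def PlausiblePreorder.equiv (P : PlausiblePreorder T) (X Y : T) : Prop :=
  P.le X Y ∧ P.le Y X

/-- The conditional expectation of `X` given event `C` is the real number `x`. -/
def CondExpReal (P : PlausiblePreorder T) (X C : T) (x : ℝ) : Prop :=
  ∀ ε : ℝ, 0 < ε →
    P.lt ((-ε) • C) (X * C - x • C) ∧ P.lt (X * C - x • C) (ε • C)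

/-- The conditional expectation of `X` given event `C` is `+∞`. -/
def CondExpTop (P : PlausiblePreorder T) (X C : T) : Prop :=
  ∀ y : ℝ, P.lt (y • C) (X * C)

/-- The conditional expectation of `X` given event `C` is `-∞`. -/
def CondExpBot (P : PlausiblePreorder T) (X C : T) : Prop :=
  ∀ y : ℝ, P.lt (X * C) (y • C)


lemma PlausiblePreorder.le_trans' (P : PlausiblePreorder T) {A B C : T}
    (h1 : P.le A B) (h2 : P.le B C) : P.le A C := by
  rw [P.extension] at h1 h2 ⊢
  have := P.additive _ _ h1 h2
  rwa [show B - A + (C - B) = C - A by ring] at this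

lemma PlausiblePreorder.lt_of_lt_of_le (P : PlausiblePreorder T) {A B C : T}
    (h1 : P.lt A B) (h2 : P.le B C) : P.lt A C :=
  ⟨P.le_trans' h1.1 h2, fun h => h1.2 (P.le_trans' h2 h)⟩

lemma PlausiblePreorder.lt_of_le_of_lt (P : PlausiblePreorder T) {A B C : T}
    (h1 : P.le A B) (h2 : P.lt B C) : P.lt A C :=
  ⟨P.le_trans' h1 h2.1, fun h => h2.2 (P.le_trans' h h1)⟩

theorem bayes_conditional_form_zero (P : PlausiblePreorder T) (X C D : T)
    (hC : C * C = C) (hD : D * D = D)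
    (hx : CondExpReal P (X * C) D 0)
    (hp : ∃ p : ℝ, 0 < p ∧ P.le (p • D) (C * D)) :
    CondExpReal P X (C * D) 0 := by
  obtain ⟨p, hp0, hpD⟩ := hp
  intro ε hε
  have hεp := hx (ε * p) (mul_pos hε hp0)
  simp only [zero_smul, sub_zero] at hεp ⊢
  rw [mul_assoc] at hεp
  have hkey : P.le ((ε * p) • D) (ε • (C * D)) := by
    rw [P.extension]
    have := P.smul_nonneg ε (C * D - p • D) hε.le (by rw [← P.extension]; exact hpD)
    rwa [smul_sub, smul_smul] at this
  have hkey' : P.le ((-ε) • (C * D)) ((-(ε * p)) • D) := by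
    rw [P.extension] at hkey ⊢
    have e : -(ε * p) • D - (-ε) • (C * D) = ε • (C * D) - (ε * p) • D := by module
    rw [e]; exact hkey
  exact ⟨P.lt_of_le_of_lt hkey' hεp.1, P.lt_of_lt_of_le hεp.2 hkey⟩
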